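/- Let ρ be a dissectible solution notion and f : Θ → X a social choice function. Then for every nonempty E ⊆ Θ and all θ, θ' ∈ Θ: if θ ∈ E and θ' ∈ γ^{(ρ,f)}[E,θ], then γ^{(ρ,f)}[E,θ'] ⊆ γ^{(ρ,f)}[E,θ]. -/
import Mathlib


open scoped Classical

namespace SeqMech

variable {I : Type*} {Θi : I → Type*} {X : Type*}

/-- Projection of a set of states onto agent `i`'s coordinate. -/
def proj (i : I) (E : Set (∀ j, Θi j)) : Set (Θi i) :=
  (fun θ => θ i) '' E

/-- Projection of a set of states onto the coordinates of the agents other than `i`. -/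
def projNeg (i : I) (E : Set (∀ j, Θi j)) :
    Set (∀ j : {j : I // j ≠ i}, Θi j.1) :=
  (fun θ (j : {j : I // j ≠ i}) => θ j.1) '' E

/-- The semi-operator property: nonempty sets are mapped to nonempty sets. -/
def IsSemiOp (γ : Set (∀ j, Θi j) → (∀ j, Θi j) → Set (∀ j, Θi j)) : Prop :=
  ∀ E θ, E.Nonempty → (γ E θ).Nonempty

/-- A solution notion: `R f γ E θ θ' i Fhat` means `ρ[f,(γ,E),θ,θ',i,Fhat] = 1`.  Its value
depends only on `(f, γ_i[E,θ], θ_i, θ'_i, Fhat_{-i})`. -/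
structure SolutionNotion (I : Type*) (Θi : I → Type*) (X : Type*) where
  R : ((∀ j, Θi j) → X) →
      (Set (∀ j, Θi j) → (∀ j, Θi j) → Set (∀ j, Θi j)) →
      Set (∀ j, Θi j) → (∀ j, Θi j) → (∀ j, Θi j) → I → Set (∀ j, Θi j) → Prop
  meas : ∀ f γ γ' E E' θ τ θ' τ' (i : I) Fhat Fhat',
      proj i (γ E θ) = proj i (γ' E' τ) →
      θ i = τ i → θ' i = τ' i →
      projNeg i Fhat = projNeg i Fhat' →
      (R f γ E θ θ' i Fhat ↔ R f γ' E' τ τ' i Fhat')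

/-- Dissectibility of a solution notion. -/
def Dissectible (ρ : SolutionNotion I Θi X) : Prop :=
  ∀ f γ E θ θ' (i : I) Fhat,
    IsSemiOp γ → E.Nonempty → θ ∈ E → θ' ∈ E →
    (¬ ρ.R f γ E θ θ' i Fhat ↔
      ∃ τ ∈ γ E θ, ∃ γ' : Set (∀ j, Θi j) → (∀ j, Θi j) → Set (∀ j, Θi j),
        IsSemiOp γ' ∧ γ' E θ = {θ, τ} ∧ ¬ ρ.R f γ' E θ θ' i Fhat)

/-- `θ >_i^{[(ρ,f),(γ,E)]} θ'`. -/
def gtRel (ρ : SolutionNotion I Θi X) (f : (∀ j, Θi j) → X)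
    (γ : Set (∀ j, Θi j) → (∀ j, Θi j) → Set (∀ j, Θi j))
    (E : Set (∀ j, Θi j)) (i : I) (θ θ' : ∀ j, Θi j) : Prop :=
  θ ∈ E ∧ θ' ∈ E ∧ ¬ ρ.R f γ E θ θ' i E

/-- `θ ∼_i^{[(ρ,f),(γ,E)]} θ'`. -/
def simRel (ρ : SolutionNotion I Θi X) (f : (∀ j, Θi j) → X)
    (γ : Set (∀ j, Θi j) → (∀ j, Θi j) → Set (∀ j, Θi j))
    (E : Set (∀ j, Θi j)) (i : I) (θ θ' : ∀ j, Θi j) : Prop :=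
  θ i = θ' i ∨ gtRel ρ f γ E i θ θ' ∨ gtRel ρ f γ E i θ' θ

/-- `canonN ρ f n` is the semi-operator `γ^{(ρ,f)-(n+1)}`. -/
noncomputable def canonN (ρ : SolutionNotion I Θi X) (f : (∀ j, Θi j) → X) :
    ℕ → Set (∀ j, Θi j) → (∀ j, Θi j) → Set (∀ j, Θi j)
  | 0 => fun E θ => if θ ∈ E then {θ} else E
  | n + 1 => fun E θ =>
      if θ ∈ E then
        ⋃ τ ∈ canonN ρ f n E θ,
          {θ' ∈ E | ∀ i, simRel ρ f (canonN ρ f n) E i τ θ'}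
      else E

/-- The canonical semi-operator `γ^{(ρ,f)}`. -/
noncomputable def canon (ρ : SolutionNotion I Θi X) (f : (∀ j, Θi j) → X) :
    Set (∀ j, Θi j) → (∀ j, Θi j) → Set (∀ j, Θi j) :=
  fun E θ => if θ ∈ E then ⋃ n, canonN ρ f n E θ else E

lemma canonN_subset (ρ : SolutionNotion I Θi X) (f : (∀ j, Θi j) → X)
    (n : ℕ) (E : Set (∀ j, Θi j)) (θ : ∀ j, Θi j) (hθ : θ ∈ E) :
    canonN ρ f n E θ ⊆ E := by
  cases n with
  | zero => intro σ hσ; simp only [canonN, if_pos hθ, Set.mem_singleton_iff] at hσ; subst hσ; exact hθ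
  | succ n =>
    intro σ hσ
    simp only [canonN, if_pos hθ, Set.mem_iUnion] at hσ
    obtain ⟨τ, _, hσ⟩ := hσ
    exact hσ.1

lemma mem_canonN_self (ρ : SolutionNotion I Θi X) (f : (∀ j, Θi j) → X)
    (n : ℕ) (E : Set (∀ j, Θi j)) (θ : ∀ j, Θi j) (hθ : θ ∈ E) :
    θ ∈ canonN ρ f n E θ := by
  induction n with
  | zero => simp [canonN, hθ]
  | succ n ih =>
    simp only [canonN, if_pos hθ]
    exact Set.mem_iUnion₂.mpr ⟨θ, ih, hθ, fun i => Or.inl rfl⟩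

lemma isSemiOp_canonN (ρ : SolutionNotion I Θi X) (f : (∀ j, Θi j) → X) (n : ℕ) :
    IsSemiOp (canonN ρ f n) := by
  intro E θ hE
  by_cases hθ : θ ∈ E
  · exact ⟨θ, mem_canonN_self ρ f n E θ hθ⟩
  · have h : canonN ρ f n E θ = E := by cases n <;> simp [canonN, hθ]
    rw [h]; exact hE

lemma notR_mono {ρ : SolutionNotion I Θi X} (hρ : Dissectible ρ)
    {f : (∀ j, Θi j) → X} {γ1 γ2 : Set (∀ j, Θi j) → (∀ j, Θi j) → Set (∀ j, Θi j)}
    {E : Set (∀ j, Θi j)} {θ θ' : ∀ j, Θi j} {i : I} {F : Set (∀ j, Θi j)}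
    (hs1 : IsSemiOp γ1) (hs2 : IsSemiOp γ2) (hsub : γ1 E θ ⊆ γ2 E θ)
    (hE : E.Nonempty) (hθ : θ ∈ E) (hθ' : θ' ∈ E)
    (h : ¬ ρ.R f γ1 E θ θ' i F) : ¬ ρ.R f γ2 E θ θ' i F := by
  rw [hρ f γ1 E θ θ' i F hs1 hE hθ hθ'] at h
  obtain ⟨τ, hτ, γ', hγ'⟩ := h
  exact (hρ f γ2 E θ θ' i F hs2 hE hθ hθ').mpr ⟨τ, hsub hτ, γ', hγ'⟩

lemma canonN_mono_succ (ρ : SolutionNotion I Θi X) (f : (∀ j, Θi j) → X)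
    (n : ℕ) (E : Set (∀ j, Θi j)) (θ : ∀ j, Θi j) :
    canonN ρ f n E θ ⊆ canonN ρ f (n + 1) E θ := by
  by_cases hθ : θ ∈ E
  · intro σ hσ
    have hσE : σ ∈ E := canonN_subset ρ f n E θ hθ hσ
    simp only [canonN, if_pos hθ]
    exact Set.mem_iUnion₂.mpr ⟨σ, hσ, hσE, fun i => Or.inl rfl⟩
  · have h1 : canonN ρ f n E θ = E := by cases n <;> simp [canonN, hθ]
    have h2 : canonN ρ f (n + 1) E θ = E := by simp [canonN, hθ]
    rw [h1, h2]

lemma canonN_mono (ρ : SolutionNotion I Θi X) (f : (∀ j, Θi j) → X)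
    {n m : ℕ} (h : n ≤ m) (E : Set (∀ j, Θi j)) (θ : ∀ j, Θi j) :
    canonN ρ f n E θ ⊆ canonN ρ f m E θ := by
  induction h with
  | refl => exact subset_rfl
  | step _ ih => exact (ih).trans (canonN_mono_succ ρ f _ E θ)

lemma gtRel_mono {ρ : SolutionNotion I Θi X} (hρ : Dissectible ρ)
    (f : (∀ j, Θi j) → X) {n m : ℕ} (h : n ≤ m)
    (E : Set (∀ j, Θi j)) (i : I) (a b : ∀ j, Θi j)
    (hg : gtRel ρ f (canonN ρ f n) E i a b) :
    gtRel ρ f (canonN ρ f m) E i a b := by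
  obtain ⟨ha, hb, hR⟩ := hg
  exact ⟨ha, hb, notR_mono hρ (isSemiOp_canonN ρ f n) (isSemiOp_canonN ρ f m)
    (canonN_mono ρ f h E a) ⟨a, ha⟩ ha hb hR⟩

lemma simRel_mono {ρ : SolutionNotion I Θi X} (hρ : Dissectible ρ)
    (f : (∀ j, Θi j) → X) {n m : ℕ} (h : n ≤ m)
    (E : Set (∀ j, Θi j)) (i : I) (a b : ∀ j, Θi j)
    (hs : simRel ρ f (canonN ρ f n) E i a b) :
    simRel ρ f (canonN ρ f m) E i a b := by
  rcases hs with h1 | h2 | h3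
  · exact Or.inl h1
  · exact Or.inr (Or.inl (gtRel_mono hρ f h E i a b h2))
  · exact Or.inr (Or.inr (gtRel_mono hρ f h E i b a h3))

/-- transitivity of the canonical semi-operator of a dissectible
solution notion: if `θ ∈ E` and `θ' ∈ γ^{(ρ,f)}[E,θ]`, then
`γ^{(ρ,f)}[E,θ'] ⊆ γ^{(ρ,f)}[E,θ]`. -/
theorem canon_trans
    [Fintype I] [Nonempty I] [∀ i, Fintype (Θi i)] [∀ i, Nonempty (Θi i)]
    (ρ : SolutionNotion I Θi X) (hρ : Dissectible ρ) (f : (∀ j, Θi j) → X)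
    (E : Set (∀ j, Θi j)) (hE : E.Nonempty)
    (θ θ' : ∀ j, Θi j) (hθ : θ ∈ E) (hθ' : θ' ∈ canon ρ f E θ) :
    canon ρ f E θ' ⊆ canon ρ f E θ := by
  simp only [canon, if_pos hθ, Set.mem_iUnion] at hθ'
  obtain ⟨n0, hn0⟩ := hθ'
  have hθ'E : θ' ∈ E := canonN_subset ρ f n0 E θ hθ hn0
  -- main claim: every level of canonN at θ' is inside canon at θ
  have key : ∀ m, canonN ρ f m E θ' ⊆ ⋃ n, canonN ρ f n E θ := by
    intro m
    induction m with
    | zero =>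
      intro σ hσ
      simp only [canonN, if_pos hθ'E, Set.mem_singleton_iff] at hσ
      subst hσ
      exact Set.mem_iUnion.mpr ⟨n0, hn0⟩
    | succ m ih =>
      intro σ hσ
      simp only [canonN, if_pos hθ'E, Set.mem_iUnion] at hσ
      obtain ⟨τ, hτ, hσE, hsim⟩ := hσ
      -- τ ∈ canon at θ, so τ ∈ canonN k E θ for some k
      obtain ⟨k, hk⟩ := Set.mem_iUnion.mp (ih hτ)
      set N := max k m with hN
      have hτN : τ ∈ canonN ρ f N E θ := canonN_mono ρ f (le_max_left k m) E θ hk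
      have hsimN : ∀ i, simRel ρ f (canonN ρ f N) E i τ σ := fun i =>
        simRel_mono hρ f (le_max_right k m) E i τ σ (hsim i)
      refine Set.mem_iUnion.mpr ⟨N + 1, ?_⟩
      simp only [canonN, if_pos hθ]
      exact Set.mem_iUnion₂.mpr ⟨τ, hτN, hσE, hsimN⟩
  intro σ hσ
  simp only [canon, if_pos hθ'E, if_pos hθ, Set.mem_iUnion] at hσ ⊢
  obtain ⟨m, hm⟩ := hσ
  exact Set.mem_iUnion.mp (key m hm)

end SeqMech
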